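/- Let 1 < p < ∞ and let μ₀, μ₁, ν be Borel probability measures on ℝ^d supported in B(0,M) for some M > 0. Then |W_p^p(μ₁, ν) − W_p^p(μ₀, ν)| ≤ C_{p,M} · W₁(μ₀, μ₁), where C_{p,M} = p·2^{p−1}·M^{p−1} and W₁ is the 1-Wasserstein distance. -/
import Mathlib


open MeasureTheory Metric

variable {d : ℕ}

/-- The p-th power of the p-Wasserstein distance, as infimum of transport cost over couplings. -/
noncomputable def Wpp {E : Type*} [NormedAddCommGroup E] [MeasurableSpace E]
    (p : ℝ) (μ ν : Measure E) : ℝ :=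
  sInf {r | ∃ π : Measure (E × E),
    π.map Prod.fst = μ ∧ π.map Prod.snd = ν ∧ r = ∫ z, ‖z.1 - z.2‖ ^ p ∂π}

open Set ProbabilityTheory

section Aux

lemma rpow_le_rpow_add_of_le {p R a b : ℝ} (hp : 1 < p) (ha : a ∈ Set.Icc 0 R)
    (hb : b ∈ Set.Icc 0 R) :
    a ^ p ≤ b ^ p + p * R ^ (p - 1) * |a - b| := by
  have hR : 0 ≤ R := le_trans ha.1 ha.2
  have hC : 0 ≤ p * R ^ (p - 1) * |a - b| := by positivity
  rcases le_total a b with hab | hab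
  · have : a ^ p ≤ b ^ p := Real.rpow_le_rpow ha.1 hab (by linarith)
    linarith
  · have key := norm_image_sub_le_of_norm_deriv_le_segment'
      (f := fun x : ℝ => x ^ p) (f' := fun x : ℝ => p * x ^ (p - 1))
      (a := b) (b := a) (C := p * R ^ (p - 1))
      (fun x _ => (Real.hasDerivAt_rpow_const (Or.inr hp.le)).hasDerivWithinAt)
      (fun x hx => by
        have hx0 : (0:ℝ) ≤ x := le_trans hb.1 hx.1
        have hxR : x ≤ R := le_trans hx.2.le ha.2
        have : x ^ (p - 1) ≤ R ^ (p - 1) := Real.rpow_le_rpow hx0 hxR (by linarith)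
        have hge : (0:ℝ) ≤ x ^ (p - 1) := Real.rpow_nonneg hx0 _
        show |p * x ^ (p - 1)| ≤ _
        rw [abs_of_nonneg (by positivity)]
        exact mul_le_mul_of_nonneg_left this (by linarith))
      a (right_mem_Icc.mpr hab)
    simp only [Real.norm_eq_abs] at key
    have h2 : a ^ p - b ^ p ≤ p * R ^ (p - 1) * (a - b) := le_trans (le_abs_self _) key
    rw [abs_of_nonneg (show (0:ℝ) ≤ a - b by linarith)]
    linarith

variable {E : Type*} [NormedAddCommGroup E] [MeasurableSpace E]

/-- The set of transport costs. -/
def WppSet (p : ℝ) (μ ν : Measure E) : Set ℝ :=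
  {r | ∃ π : Measure (E × E),
    π.map Prod.fst = μ ∧ π.map Prod.snd = ν ∧ r = ∫ z, ‖z.1 - z.2‖ ^ p ∂π}

lemma Wpp_eq_sInf (p : ℝ) (μ ν : Measure E) : Wpp p μ ν = sInf (WppSet p μ ν) := rfl

lemma WppSet_nonneg {p : ℝ} {μ ν : Measure E} {r : ℝ} (hr : r ∈ WppSet p μ ν) : 0 ≤ r := by
  obtain ⟨π, -, -, rfl⟩ := hr
  exact integral_nonneg fun z => Real.rpow_nonneg (norm_nonneg _) _

lemma WppSet_bddBelow (p : ℝ) (μ ν : Measure E) : BddBelow (WppSet p μ ν) :=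
  ⟨0, fun _ hr => WppSet_nonneg hr⟩

lemma WppSet_nonempty (p : ℝ) (μ ν : Measure E)
    [IsProbabilityMeasure μ] [IsProbabilityMeasure ν] : (WppSet p μ ν).Nonempty := by
  refine ⟨_, μ.prod ν, ?_, ?_, rfl⟩
  · simp
  · simp

lemma Wpp_nonneg (p : ℝ) (μ ν : Measure E) [IsProbabilityMeasure μ] [IsProbabilityMeasure ν] :
    0 ≤ Wpp p μ ν :=
  le_csInf (WppSet_nonempty p μ ν) fun _ hr => WppSet_nonneg hr

end Aux

section Sym

lemma WppSet_comm {d : ℕ} (p : ℝ) (hp : 0 < p) (μ ν : Measure (EuclideanSpace ℝ (Fin d))) :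
    WppSet p μ ν = WppSet p ν μ := by
  set E := EuclideanSpace ℝ (Fin d)
  have hc : Continuous fun z : E × E => ‖z.1 - z.2‖ ^ p :=
    (continuous_fst.sub continuous_snd).norm.rpow_const fun z => Or.inr hp.le
  have key : ∀ (μ ν : Measure E), WppSet p μ ν ⊆ WppSet p ν μ := by
    rintro μ ν r ⟨π, h1, h2, rfl⟩
    refine ⟨π.map Prod.swap, ?_, ?_, ?_⟩
    · rw [Measure.map_map measurable_fst measurable_swap]
      exact h2
    · rw [Measure.map_map measurable_snd measurable_swap]
      exact h1
    · rw [integral_map measurable_swap.aemeasurable hc.aestronglyMeasurable]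
      simp only [Prod.snd_swap, Prod.fst_swap]
      congr 1
      ext z
      rw [norm_sub_rev]
  exact le_antisymm (key μ ν) (key ν μ)

end Sym

section Glue

set_option maxHeartbeats 1000000 in
lemma glue_step (p M : ℝ) (hp : 1 < p) (hM : 0 < M)
    (μ₀ μ₁ ν : Measure (EuclideanSpace ℝ (Fin d)))
    [IsProbabilityMeasure μ₀] [IsProbabilityMeasure μ₁] [IsProbabilityMeasure ν]
    (hμ₀ : μ₀ (ball (0 : EuclideanSpace ℝ (Fin d)) M)ᶜ = 0)
    (hμ₁ : μ₁ (ball (0 : EuclideanSpace ℝ (Fin d)) M)ᶜ = 0)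
    (hν : ν (ball (0 : EuclideanSpace ℝ (Fin d)) M)ᶜ = 0)
    {a b : ℝ} (ha : a ∈ WppSet p μ₀ ν) (hb : b ∈ WppSet 1 μ₀ μ₁) :
    Wpp p μ₁ ν ≤ a + p * 2 ^ (p - 1) * M ^ (p - 1) * b := by
  set E := EuclideanSpace ℝ (Fin d) with hE
  set C : ℝ := p * 2 ^ (p - 1) * M ^ (p - 1) with hCdef
  obtain ⟨γ, hγ1, hγ2, ha⟩ := ha
  obtain ⟨σ, hσ1, hσ2, hb⟩ := hb
  haveI : IsProbabilityMeasure γ := by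
    constructor
    have h := Measure.map_apply (f := (Prod.fst : E × E → E)) (μ := γ)
      measurable_fst MeasurableSet.univ
    rw [hγ1, Set.preimage_univ] at h
    rw [← h, measure_univ]
  haveI : IsProbabilityMeasure σ := by
    constructor
    have h := Measure.map_apply (f := (Prod.fst : E × E → E)) (μ := σ)
      measurable_fst MeasurableSet.univ
    rw [hσ1, Set.preimage_univ] at h
    rw [← h, measure_univ]
  set κ := γ.condKernel with hκ
  have hfst : γ.fst = μ₀ := hγ1
  have hdis : μ₀ ⊗ₘ κ = γ := by rw [← hfst]; exact γ.disintegrate κ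
  set κ' := κ.comap (Prod.fst : E × E → E) measurable_fst with hκ'
  set τ := σ ⊗ₘ κ' with hτ
  have hg : Measurable fun q : (E × E) × E => (q.1.1, q.2) :=
    (measurable_fst.fst).prodMk measurable_snd
  have he : Measurable fun q : (E × E) × E => (q.1.2, q.2) :=
    (measurable_fst.snd).prodMk measurable_snd
  have hτγ : τ.map (fun q : (E × E) × E => (q.1.1, q.2)) = γ := by
    ext s hs
    rw [Measure.map_apply hg hs, Measure.compProd_apply (hg hs)]
    have h1 : ∀ x : E × E,
        κ' x (Prod.mk x ⁻¹' ((fun q : (E × E) × E => (q.1.1, q.2)) ⁻¹' s))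
          = κ x.1 (Prod.mk x.1 ⁻¹' s) := by
      intro x; rw [Kernel.comap_apply]; rfl
    simp_rw [h1]
    rw [show (∫⁻ x : E × E, κ x.1 (Prod.mk x.1 ⁻¹' s) ∂σ)
          = ∫⁻ x₀, κ x₀ (Prod.mk x₀ ⁻¹' s) ∂(σ.map Prod.fst) from
        (lintegral_map (Kernel.measurable_kernel_prodMk_left hs) measurable_fst).symm,
      hσ1, ← Measure.compProd_apply hs, hdis]
  have hτσ : τ.map (Prod.fst : (E × E) × E → E × E) = σ := Measure.fst_compProd σ κ'
  set π := τ.map (fun q : (E × E) × E => (q.1.2, q.2)) with hπ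
  have hπ1 : π.map Prod.fst = μ₁ := by
    rw [hπ, Measure.map_map measurable_fst he,
      show (Prod.fst ∘ fun q : (E × E) × E => (q.1.2, q.2))
        = (Prod.snd ∘ (Prod.fst : (E × E) × E → E × E)) from rfl,
      ← Measure.map_map measurable_snd measurable_fst, hτσ, hσ2]
  have hπ2 : π.map Prod.snd = ν := by
    rw [hπ, Measure.map_map measurable_snd he,
      show (Prod.snd ∘ fun q : (E × E) × E => (q.1.2, q.2))
        = (Prod.snd ∘ fun q : (E × E) × E => (q.1.1, q.2)) from rfl,
      ← Measure.map_map measurable_snd hg, hτγ, hγ2]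
  have hcp : Continuous fun z : E × E => ‖z.1 - z.2‖ ^ p :=
    (continuous_fst.sub continuous_snd).norm.rpow_const fun z => Or.inr (by linarith)
  have hc1 : Continuous fun z : E × E => ‖z.1 - z.2‖ ^ (1 : ℝ) :=
    (continuous_fst.sub continuous_snd).norm.rpow_const fun z => Or.inr (by norm_num)
  have hWle : Wpp p μ₁ ν ≤ ∫ z, ‖z.1 - z.2‖ ^ p ∂π :=
    csInf_le (WppSet_bddBelow p μ₁ ν) ⟨π, hπ1, hπ2, rfl⟩
  have hι1 : ∫ z, ‖z.1 - z.2‖ ^ p ∂π = ∫ q : (E × E) × E, ‖q.1.2 - q.2‖ ^ p ∂τ := by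
    rw [hπ, integral_map he.aemeasurable hcp.aestronglyMeasurable]
  have hι2 : a = ∫ q : (E × E) × E, ‖q.1.1 - q.2‖ ^ p ∂τ := by
    rw [ha, ← hτγ, integral_map hg.aemeasurable hcp.aestronglyMeasurable]
  have hι3 : b = ∫ q : (E × E) × E, ‖q.1.1 - q.1.2‖ ∂τ := by
    rw [hb, ← hτσ, integral_map measurable_fst.aemeasurable hc1.aestronglyMeasurable]
    simp [Real.rpow_one]
  -- a.e. membership in the ball
  set B := ball (0 : E) M with hB
  have hmem : ∀ (f : (E × E) × E → E), Measurable f → ∀ (μ : Measure E),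
      τ.map f = μ → μ Bᶜ = 0 → ∀ᵐ q ∂τ, f q ∈ B := by
    intro f hf μ hmap hnull
    have h0 : τ (f ⁻¹' Bᶜ) = 0 := by
      rw [← Measure.map_apply hf measurableSet_ball.compl, hmap]; exact hnull
    rw [ae_iff]
    exact h0
  have h00 : τ.map (fun q : (E × E) × E => q.1.1) = μ₀ := by
    rw [show (fun q : (E × E) × E => q.1.1)
        = (Prod.fst ∘ (Prod.fst : (E × E) × E → E × E)) from rfl,
      ← Measure.map_map measurable_fst measurable_fst, hτσ, hσ1]
  have h11 : τ.map (fun q : (E × E) × E => q.1.2) = μ₁ := by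
    rw [show (fun q : (E × E) × E => q.1.2)
        = (Prod.snd ∘ (Prod.fst : (E × E) × E → E × E)) from rfl,
      ← Measure.map_map measurable_snd measurable_fst, hτσ, hσ2]
  have h22 : τ.map (fun q : (E × E) × E => q.2) = ν := by
    rw [show (fun q : (E × E) × E => q.2)
        = (Prod.snd ∘ fun q : (E × E) × E => (q.1.1, q.2)) from rfl,
      ← Measure.map_map measurable_snd hg, hτγ, hγ2]
  have hae0 := hmem _ (measurable_fst.fst) μ₀ h00 hμ₀
  have hae1 := hmem _ (measurable_fst.snd) μ₁ h11 hμ₁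
  have hae2 := hmem _ measurable_snd ν h22 hν
  have hconst : p * (2 * M) ^ (p - 1) = C := by
    rw [Real.mul_rpow (by norm_num) hM.le, hCdef, mul_assoc]
  have hae : ∀ᵐ q : (E × E) × E ∂τ,
      ‖q.1.2 - q.2‖ ^ p ≤ ‖q.1.1 - q.2‖ ^ p + C * ‖q.1.1 - q.1.2‖ := by
    filter_upwards [hae0, hae1, hae2] with q h0 h1 h2
    have n0 : ‖q.1.1‖ < M := mem_ball_zero_iff.mp h0
    have n1 : ‖q.1.2‖ < M := mem_ball_zero_iff.mp h1
    have n2 : ‖q.2‖ < M := mem_ball_zero_iff.mp h2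
    have hA : ‖q.1.2 - q.2‖ ∈ Set.Icc 0 (2 * M) :=
      ⟨norm_nonneg _, by have := norm_sub_le q.1.2 q.2; linarith⟩
    have hBm : ‖q.1.1 - q.2‖ ∈ Set.Icc 0 (2 * M) :=
      ⟨norm_nonneg _, by have := norm_sub_le q.1.1 q.2; linarith⟩
    have key := rpow_le_rpow_add_of_le hp hA hBm
    have habs : |‖q.1.2 - q.2‖ - ‖q.1.1 - q.2‖| ≤ ‖q.1.1 - q.1.2‖ := by
      have h := abs_norm_sub_norm_le (q.1.2 - q.2) (q.1.1 - q.2)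
      rw [sub_sub_sub_cancel_right] at h
      rw [show ‖q.1.1 - q.1.2‖ = ‖q.1.2 - q.1.1‖ from norm_sub_rev _ _]
      exact h
    have hCpos : (0:ℝ) ≤ p * (2 * M) ^ (p - 1) := by positivity
    have hfin : p * (2 * M) ^ (p - 1) * |‖q.1.2 - q.2‖ - ‖q.1.1 - q.2‖|
        ≤ C * ‖q.1.1 - q.1.2‖ := by
      rw [← hconst]
      exact mul_le_mul_of_nonneg_left habs hCpos
    linarith
  -- integrability
  have hbd : ∀ (f : (E × E) × E → E × E), Measurable f → Continuous f →
      (∀ᵐ q ∂τ, (f q).1 ∈ B) → (∀ᵐ q ∂τ, (f q).2 ∈ B) →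
      Integrable (fun q => ‖(f q).1 - (f q).2‖ ^ p) τ := by
    intro f hf hcf hm1 hm2
    refine Integrable.mono' (integrable_const ((2 * M) ^ p))
      ((hcp.comp hcf).aestronglyMeasurable) ?_
    filter_upwards [hm1, hm2] with q h1 h2
    have n1 : ‖(f q).1‖ < M := mem_ball_zero_iff.mp h1
    have n2 : ‖(f q).2‖ < M := mem_ball_zero_iff.mp h2
    rw [Real.norm_eq_abs, abs_of_nonneg (Real.rpow_nonneg (norm_nonneg _) _)]
    refine Real.rpow_le_rpow (norm_nonneg _) ?_ (by linarith)
    have := norm_sub_le (f q).1 (f q).2; linarith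
  have hint1 : Integrable (fun q : (E × E) × E => ‖q.1.2 - q.2‖ ^ p) τ := by
    have := hbd (fun q : (E × E) × E => (q.1.2, q.2)) he
      ((continuous_fst.snd).prodMk continuous_snd) hae1 hae2
    simpa using this
  have hint2 : Integrable (fun q : (E × E) × E => ‖q.1.1 - q.2‖ ^ p) τ := by
    have := hbd (fun q : (E × E) × E => (q.1.1, q.2)) hg
      ((continuous_fst.fst).prodMk continuous_snd) hae0 hae2
    simpa using this
  have hint3 : Integrable (fun q : (E × E) × E => ‖q.1.1 - q.1.2‖) τ := by
    refine Integrable.mono' (integrable_const (2 * M))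
      ((continuous_fst.fst.sub continuous_fst.snd).norm.aestronglyMeasurable) ?_
    filter_upwards [hae0, hae1] with q h0 h1
    have n0 : ‖q.1.1‖ < M := mem_ball_zero_iff.mp h0
    have n1 : ‖q.1.2‖ < M := mem_ball_zero_iff.mp h1
    rw [Real.norm_eq_abs, abs_of_nonneg (norm_nonneg _)]
    have := norm_sub_le q.1.1 q.1.2; linarith
  calc Wpp p μ₁ ν ≤ ∫ z, ‖z.1 - z.2‖ ^ p ∂π := hWle
    _ = ∫ q : (E × E) × E, ‖q.1.2 - q.2‖ ^ p ∂τ := hι1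
    _ ≤ ∫ q : (E × E) × E, (‖q.1.1 - q.2‖ ^ p + C * ‖q.1.1 - q.1.2‖) ∂τ :=
        integral_mono_ae hint1 (hint2.add (hint3.const_mul C)) hae
    _ = a + C * b := by
        rw [integral_add hint2 (hint3.const_mul C), integral_const_mul C, ← hι2, ← hι3]

lemma glue (p M : ℝ) (hp : 1 < p) (hM : 0 < M)
    (μ₀ μ₁ ν : Measure (EuclideanSpace ℝ (Fin d)))
    [IsProbabilityMeasure μ₀] [IsProbabilityMeasure μ₁] [IsProbabilityMeasure ν]
    (hμ₀ : μ₀ (ball (0 : EuclideanSpace ℝ (Fin d)) M)ᶜ = 0)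
    (hμ₁ : μ₁ (ball (0 : EuclideanSpace ℝ (Fin d)) M)ᶜ = 0)
    (hν : ν (ball (0 : EuclideanSpace ℝ (Fin d)) M)ᶜ = 0) :
    Wpp p μ₁ ν ≤ Wpp p μ₀ ν + p * 2 ^ (p - 1) * M ^ (p - 1) * Wpp 1 μ₀ μ₁ := by
  set C : ℝ := p * 2 ^ (p - 1) * M ^ (p - 1) with hCdef
  have hC : 0 < C := by
    have h2 : (0:ℝ) < (2:ℝ) ^ (p - 1) := Real.rpow_pos_of_pos (by norm_num) _
    have hMp : (0:ℝ) < M ^ (p - 1) := Real.rpow_pos_of_pos hM _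
    positivity
  have h1 : ∀ b ∈ WppSet 1 μ₀ μ₁, Wpp p μ₁ ν - C * b ≤ Wpp p μ₀ ν := by
    intro b hb
    rw [Wpp_eq_sInf p μ₀ ν]
    refine le_csInf (WppSet_nonempty _ _ _) fun a ha => ?_
    have := glue_step p M hp hM μ₀ μ₁ ν hμ₀ hμ₁ hν ha hb
    rw [← hCdef] at this
    linarith
  have h2 : ∀ b ∈ WppSet 1 μ₀ μ₁, (Wpp p μ₁ ν - Wpp p μ₀ ν) / C ≤ b := by
    intro b hb
    rw [div_le_iff₀ hC]
    have := h1 b hb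
    nlinarith
  have hle : (Wpp p μ₁ ν - Wpp p μ₀ ν) / C ≤ sInf (WppSet 1 μ₀ μ₁) :=
    le_csInf (WppSet_nonempty _ _ _) h2
  rw [div_le_iff₀ hC] at hle
  rw [Wpp_eq_sInf (1 : ℝ) μ₀ μ₁]
  nlinarith [hle]

end Glue

/-- For 1 < p < ∞ and μ₀, μ₁, ν supported in B(0,M),
|W_p^p(μ₁,ν) − W_p^p(μ₀,ν)| ≤ p·2^(p−1)·M^(p−1) · W₁(μ₀,μ₁). -/
theorem stmt3 (p M : ℝ) (hp : 1 < p) (hM : 0 < M)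
    (μ₀ μ₁ ν : Measure (EuclideanSpace ℝ (Fin d)))
    [IsProbabilityMeasure μ₀] [IsProbabilityMeasure μ₁] [IsProbabilityMeasure ν]
    (hμ₀ : μ₀ (ball (0 : EuclideanSpace ℝ (Fin d)) M)ᶜ = 0)
    (hμ₁ : μ₁ (ball (0 : EuclideanSpace ℝ (Fin d)) M)ᶜ = 0)
    (hν : ν (ball (0 : EuclideanSpace ℝ (Fin d)) M)ᶜ = 0) :
    |Wpp p μ₁ ν - Wpp p μ₀ ν| ≤ p * 2 ^ (p - 1) * M ^ (p - 1) * Wpp 1 μ₀ μ₁ := by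
  have hsym : Wpp 1 μ₁ μ₀ = Wpp 1 μ₀ μ₁ := by
    rw [Wpp_eq_sInf, Wpp_eq_sInf, WppSet_comm 1 one_pos]
  have hgl1 := glue p M hp hM μ₀ μ₁ ν hμ₀ hμ₁ hν
  have hgl2 := glue p M hp hM μ₁ μ₀ ν hμ₁ hμ₀ hν
  rw [hsym] at hgl2
  rw [abs_sub_le_iff]
  constructor <;> linarith
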